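/- Let A ∈ ℝ^{n×n}, C ∈ ℝ^{p×n}, and B̄ ∈ ℝ^{n×q}. Let W* be the intersection of all (C,A)-invariant subspaces of ℝⁿ containing Im B̄, and let V* be the sum of all (Aᵀ,Cᵀ)-invariant subspaces of ℝⁿ contained in ker B̄ᵀ. Then V* = (W*)^⊥, i.e., the supremal (Aᵀ,Cᵀ)-invariant subspace contained in ker B̄ᵀ is the orthogonal complement of the infimal (C,A)-invariant subspace containing Im B̄. -/

import Mathlib

open Matrix

/-- A subspace `W` of Euclidean `ℝⁿ` is `(C,A)`-invariant if `(A + LC) W ⊆ W` for some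
output-injection matrix `L`. -/
def IsCAInvariantE {n p : ℕ} (A : Matrix (Fin n) (Fin n) ℝ)
    (C : Matrix (Fin p) (Fin n) ℝ) (W : Submodule ℝ (EuclideanSpace ℝ (Fin n))) : Prop :=
  ∃ L : Matrix (Fin n) (Fin p) ℝ, ∀ x ∈ W, (WithLp.toLp 2 ((A + L * C).mulVec x) : EuclideanSpace ℝ (Fin n)) ∈ W

/-- A subspace `V` of Euclidean `ℝⁿ` is `(Aᵀ,Cᵀ)`-invariant if `(Aᵀ + CᵀF) V ⊆ V` for some
matrix `F`. -/
def IsDualInvariantE {n p : ℕ} (A : Matrix (Fin n) (Fin n) ℝ)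
    (C : Matrix (Fin p) (Fin n) ℝ) (V : Submodule ℝ (EuclideanSpace ℝ (Fin n))) : Prop :=
  ∃ F : Matrix (Fin p) (Fin n) ℝ, ∀ x ∈ V, (WithLp.toLp 2 ((Aᵀ + Cᵀ * F).mulVec x) : EuclideanSpace ℝ (Fin n)) ∈ V

private lemma inner_eq_dot {n : ℕ} (x y : EuclideanSpace ℝ (Fin n)) : inner ℝ x y = x ⬝ᵥ y := by
  simp [PiLp.inner_apply, dotProduct, RCLike.inner_apply, mul_comm]

private lemma dot_mulVec {n m : ℕ} (M : Matrix (Fin n) (Fin m) ℝ) (x : Fin n → ℝ) (y : Fin m → ℝ) :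
    x ⬝ᵥ M.mulVec y = (Mᵀ.mulVec x) ⬝ᵥ y := by
  rw [dotProduct_mulVec, ← mulVec_transpose]

private lemma orth_stable {n : ℕ} (M : Matrix (Fin n) (Fin n) ℝ)
    (V : Submodule ℝ (EuclideanSpace ℝ (Fin n)))
    (h : ∀ x ∈ V, (WithLp.toLp 2 (M.mulVec x) : EuclideanSpace ℝ (Fin n)) ∈ V) :
    ∀ y ∈ Vᗮ, (WithLp.toLp 2 (Mᵀ.mulVec y) : EuclideanSpace ℝ (Fin n)) ∈ Vᗮ := by
  intro y hy
  simp only [Submodule.mem_orthogonal]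
  intro x hx
  rw [inner_eq_dot, WithLp.ofLp_toLp, dot_mulVec, transpose_transpose]
  have := (Submodule.mem_orthogonal V y).1 hy _ (h x hx)
  rw [inner_eq_dot, WithLp.ofLp_toLp] at this
  exact this

/-- The supremal `(Aᵀ,Cᵀ)`-invariant subspace `V*` contained in `ker B̄ᵀ`
is the orthogonal complement of the infimal `(C,A)`-invariant subspace `W*` containing
`Im B̄`. -/
theorem supremal_dual_eq_orthogonal_infimal (n p q : ℕ)
    (A : Matrix (Fin n) (Fin n) ℝ) (C : Matrix (Fin p) (Fin n) ℝ)
    (Bbar : Matrix (Fin n) (Fin q) ℝ) :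
    sSup {V : Submodule ℝ (EuclideanSpace ℝ (Fin n)) |
        IsDualInvariantE A C V ∧ ∀ x ∈ V, Bbarᵀ.mulVec x = 0} =
      (sInf {W : Submodule ℝ (EuclideanSpace ℝ (Fin n)) |
        IsCAInvariantE A C W ∧ ∀ c : Fin q → ℝ, (WithLp.toLp 2 (Bbar.mulVec c) : EuclideanSpace ℝ (Fin n)) ∈ W})ᗮ := by
  set S := {V : Submodule ℝ (EuclideanSpace ℝ (Fin n)) |
        IsDualInvariantE A C V ∧ ∀ x ∈ V, Bbarᵀ.mulVec x = 0} with hS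
  set T := {W : Submodule ℝ (EuclideanSpace ℝ (Fin n)) |
        IsCAInvariantE A C W ∧ ∀ c : Fin q → ℝ, (WithLp.toLp 2 (Bbar.mulVec c) : EuclideanSpace ℝ (Fin n)) ∈ W} with hT
  have hST : ∀ V ∈ S, Vᗮ ∈ T := by
    rintro V ⟨⟨F, hF⟩, hB⟩
    refine ⟨⟨Fᵀ, ?_⟩, ?_⟩
    · have := orth_stable (Aᵀ + Cᵀ * F) V hF
      simpa [Matrix.transpose_add, Matrix.transpose_mul] using this
    · intro c
      simp only [Submodule.mem_orthogonal]
      intro x hx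
      rw [inner_eq_dot, WithLp.ofLp_toLp, dot_mulVec, hB x hx, zero_dotProduct]
  have hTS : ∀ W ∈ T, Wᗮ ∈ S := by
    rintro W ⟨⟨L, hL⟩, hB⟩
    refine ⟨⟨Lᵀ, ?_⟩, ?_⟩
    · have := orth_stable (A + L * C) W hL
      simpa [Matrix.transpose_add, Matrix.transpose_mul] using this
    · intro x hx
      funext i
      have := (Submodule.mem_orthogonal W x).1 hx _ (hB (Pi.single i 1))
      rw [inner_eq_dot, WithLp.ofLp_toLp, dotProduct_comm, dot_mulVec] at this
      simpa [dotProduct_single] using this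
  apply le_antisymm
  · apply sSup_le
    intro V hV
    have h1 : sInf T ≤ Vᗮ := sInf_le (hST V hV)
    exact le_trans (Submodule.le_orthogonal_orthogonal V) (Submodule.orthogonal_le h1)
  · have h2 : (sSup S)ᗮ ≤ sInf T := by
      apply le_sInf
      intro W hW
      have : Wᗮ ≤ sSup S := le_sSup (hTS W hW)
      calc (sSup S)ᗮ ≤ Wᗮᗮ := Submodule.orthogonal_le this
        _ = W := Submodule.orthogonal_orthogonal W
    calc (sInf T)ᗮ ≤ (sSup S)ᗮᗮ := Submodule.orthogonal_le h2
      _ = sSup S := Submodule.orthogonal_orthogonal (sSup S)
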